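/- Let q ≥ 1 and X = Fin q ⊕ Fin q, and let δ be the transverse pairing with δ (inl i) = inr i for every i. Then for all pairings α and β of X: b_R(β) ≤ |δ∘α| + |α∘β|. -/

import Mathlib

/-- Number of cycles (orbits of the generated cyclic group, fixed points included). -/
noncomputable def permCycles {X : Type*} (σ : Equiv.Perm X) : ℕ :=
  Nat.card (MulAction.orbitRel.Quotient (Subgroup.zpowers σ) X)

/-- The length `|σ| = card X - #σ` of a permutation. -/
noncomputable def permLength {X : Type*} (σ : Equiv.Perm X) : ℕ :=
  Nat.card X - permCycles σ

/-- A pairing of `X` is a fixed-point-free involution of `X`. -/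
def IsPairing {X : Type*} (α : Equiv.Perm X) : Prop :=
  α * α = 1 ∧ ∀ x, α x ≠ x

/-- A pairing of `Fin q ⊕ Fin q` is transverse if it sends the L side to the R side. -/
def IsTransverse {q : ℕ} (τ : Equiv.Perm (Fin q ⊕ Fin q)) : Prop :=
  ∀ i : Fin q, (τ (Sum.inl i)).isRight

/-- `b_R(β)`: the number of R-side elements paired to R-side elements (twice the
number of bumps of `β`). -/
def bR {q : ℕ} (β : Equiv.Perm (Fin q ⊕ Fin q)) : ℕ :=
  (Finset.univ.filter fun i : Fin q => (β (Sum.inr i)).isRight).card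

/-- The transverse pairing `δ` with `δ (inl i) = inr i`. -/
def deltaPerm (q : ℕ) : Equiv.Perm (Fin q ⊕ Fin q) :=
  Equiv.sumComm (Fin q) (Fin q)

open Module LinearMap

section LinAlg

variable {X : Type*} [Fintype X]

/-- `f ↦ f ∘ σ - f`. -/
noncomputable def Dmap (σ : Equiv.Perm X) : (X → ℚ) →ₗ[ℚ] (X → ℚ) :=
  LinearMap.funLeft ℚ ℚ σ - LinearMap.id

lemma Dmap_apply (σ : Equiv.Perm X) (f : X → ℚ) (x : X) :
    Dmap σ f x = f (σ x) - f x := rfl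

lemma mem_ker_Dmap {σ : Equiv.Perm X} {f : X → ℚ} :
    f ∈ ker (Dmap σ) ↔ ∀ x, f (σ x) = f x := by
  rw [LinearMap.mem_ker]
  constructor
  · intro h x
    have h2 : Dmap σ f x = 0 := by rw [h]; rfl
    rw [Dmap_apply] at h2
    linarith
  · intro h
    funext x
    show Dmap σ f x = 0
    rw [Dmap_apply, h x, sub_self]

lemma fix_zpow {σ : Equiv.Perm X} {f : X → ℚ} (hf : ∀ x, f (σ x) = f x) :
    ∀ (n : ℤ) (x : X), f ((σ ^ n) x) = f x := by
  have hinv : ∀ x, f (σ⁻¹ x) = f x := by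
    intro x
    conv_rhs => rw [← Equiv.apply_symm_apply σ x]
    exact (hf (σ⁻¹ x)).symm
  intro n
  induction n using Int.induction_on with
  | zero => simp
  | succ k ih =>
      intro x
      have : (σ ^ ((k : ℤ) + 1)) x = (σ ^ (k : ℤ)) (σ x) := by
        rw [zpow_add_one]; rfl
      rw [this, ih (σ x), hf]
  | pred k ih =>
      intro x
      have : (σ ^ ((-k : ℤ) - 1)) x = (σ ^ (-k : ℤ)) (σ⁻¹ x) := by
        rw [zpow_sub_one]; rfl
      rw [this, ih (σ⁻¹ x), hinv]

/-- The kernel of `Dmap σ` is the space of functions constant on orbits. -/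
noncomputable def kerEquiv (σ : Equiv.Perm X) :
    ker (Dmap σ) ≃ₗ[ℚ] (MulAction.orbitRel.Quotient (Subgroup.zpowers σ) X → ℚ) where
  toFun f := Quotient.lift (f : X → ℚ) (by
    rintro a b ⟨⟨g, hg⟩, rfl⟩
    obtain ⟨n, hn⟩ := Subgroup.mem_zpowers_iff.mp hg
    have hfix := fix_zpow (mem_ker_Dmap.mp f.2)
    show (f : X → ℚ) ((⟨g, hg⟩ : Subgroup.zpowers σ) • b) = (f : X → ℚ) b
    have hsm : (⟨g, hg⟩ : Subgroup.zpowers σ) • b = (σ ^ n) b := by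
      show g b = (σ ^ n) b
      rw [hn]
    rw [hsm, hfix])
  map_add' f g := by
    funext c
    induction c using Quotient.ind
    rfl
  map_smul' r f := by
    funext c
    induction c using Quotient.ind
    rfl
  invFun g := ⟨fun x => g (Quotient.mk'' x), by
    apply mem_ker_Dmap.mpr
    intro x
    have : (Quotient.mk'' (σ x) : MulAction.orbitRel.Quotient (Subgroup.zpowers σ) X)
        = Quotient.mk'' x := by
      apply Quotient.sound
      exact ⟨⟨σ, Subgroup.mem_zpowers σ⟩, rfl⟩
    simp only [this]⟩
  left_inv f := by
    apply Subtype.ext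
    funext x
    rfl
  right_inv g := by
    funext c
    induction c using Quotient.ind
    rfl

lemma permCycles_eq_finrank_ker (σ : Equiv.Perm X) :
    permCycles σ = finrank ℚ (ker (Dmap σ)) := by
  classical
  have : Fintype (MulAction.orbitRel.Quotient (Subgroup.zpowers σ) X) := Fintype.ofFinite _
  rw [permCycles, Nat.card_eq_fintype_card, ← Module.finrank_fintype_fun_eq_card ℚ]
  exact ((kerEquiv σ).finrank_eq).symm

lemma permLength_eq_finrank_range (σ : Equiv.Perm X) :
    permLength σ = finrank ℚ (range (Dmap σ)) := by
  have h := LinearMap.finrank_range_add_finrank_ker (Dmap σ)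
  rw [Module.finrank_fintype_fun_eq_card ℚ] at h
  rw [permLength, permCycles_eq_finrank_ker, Nat.card_eq_fintype_card]
  omega

lemma Dmap_mul (σ τ : Equiv.Perm X) :
    Dmap (σ * τ) = (LinearMap.funLeft ℚ ℚ τ) ∘ₗ (Dmap σ) + Dmap τ := by
  ext f x
  simp only [Dmap, LinearMap.sub_apply, LinearMap.add_apply, LinearMap.comp_apply,
    LinearMap.funLeft_apply, LinearMap.id_apply, Pi.sub_apply, Pi.add_apply]
  show f ((σ * τ) x) - f x = (f (σ (τ x)) - f (τ x)) + (f (τ x) - f x)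
  rw [Equiv.Perm.mul_apply]
  ring

lemma permLength_mul_le (σ τ : Equiv.Perm X) :
    permLength (σ * τ) ≤ permLength σ + permLength τ := by
  rw [permLength_eq_finrank_range, permLength_eq_finrank_range, permLength_eq_finrank_range]
  have hle : range (Dmap (σ * τ)) ≤
      range ((LinearMap.funLeft ℚ ℚ τ) ∘ₗ (Dmap σ)) ⊔ range (Dmap τ) := by
    rw [Dmap_mul]
    rintro v ⟨u, rfl⟩
    exact Submodule.add_mem_sup ⟨u, rfl⟩ ⟨u, rfl⟩
  calc finrank ℚ (range (Dmap (σ * τ)))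
      ≤ finrank ℚ ((range ((LinearMap.funLeft ℚ ℚ τ) ∘ₗ (Dmap σ)) ⊔ range (Dmap τ) :
          Submodule ℚ (X → ℚ))) := Submodule.finrank_mono hle
    _ ≤ finrank ℚ (range ((LinearMap.funLeft ℚ ℚ τ) ∘ₗ (Dmap σ))) +
          finrank ℚ (range (Dmap τ)) :=
        Submodule.finrank_add_le_finrank_add_finrank _ _
    _ ≤ finrank ℚ (range (Dmap σ)) + finrank ℚ (range (Dmap τ)) := by
        gcongr
        rw [LinearMap.range_comp]
        exact Submodule.finrank_map_le _ _

end LinAlg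

section Counting

variable {q : ℕ}

lemma bR_le_permLength (β : Equiv.Perm (Fin q ⊕ Fin q)) :
    bR β ≤ permLength (deltaPerm q * β) := by
  classical
  set σ : Equiv.Perm (Fin q ⊕ Fin q) := deltaPerm q * β with hσ
  set p : Fin q ⊕ Fin q → Prop :=
    fun x => x.isRight = true ∧ (β x).isRight = true with hp
  -- σ maps elements satisfying p to L-side elements
  have hσp : ∀ x, p x → (σ x).isRight = false := by
    rintro x ⟨-, h2⟩
    obtain ⟨j, hj⟩ := Sum.isRight_iff.mp h2
    show ((deltaPerm q) (β x)).isRight = false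
    rw [hj]
    rfl
  -- the injection from the orbit quotient
  set Q := MulAction.orbitRel.Quotient (Subgroup.zpowers σ) (Fin q ⊕ Fin q) with hQ
  have hmk : ∀ x : Fin q ⊕ Fin q, (Quotient.mk'' (σ x) : Q) = Quotient.mk'' x := by
    intro x
    apply Quotient.sound
    exact ⟨⟨σ, Subgroup.mem_zpowers σ⟩, rfl⟩
  set F : Q → Fin q ⊕ Fin q := fun c => if p (Quotient.out c) then σ (Quotient.out c)
      else Quotient.out c with hF
  have hFmk : ∀ c : Q, (Quotient.mk'' (F c) : Q) = c := by
    intro c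
    by_cases h : p (Quotient.out c)
    · show (Quotient.mk'' (if p (Quotient.out c) then σ (Quotient.out c)
        else Quotient.out c) : Q) = c
      rw [if_pos h, hmk]
      exact Quotient.out_eq' c
    · show (Quotient.mk'' (if p (Quotient.out c) then σ (Quotient.out c)
        else Quotient.out c) : Q) = c
      rw [if_neg h]
      exact Quotient.out_eq' c
  have hFnp : ∀ c : Q, ¬ p (F c) := by
    intro c
    by_cases h : p (Quotient.out c)
    · show ¬ p (if p (Quotient.out c) then σ (Quotient.out c) else Quotient.out c)
      rw [if_pos h]
      intro hcontra
      have h2 := hσp _ h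
      rw [hcontra.1] at h2
      simp at h2
    · show ¬ p (if p (Quotient.out c) then σ (Quotient.out c) else Quotient.out c)
      rw [if_neg h]
      exact h
  set F' : Q → {x : Fin q ⊕ Fin q // ¬ p x} := fun c => ⟨F c, hFnp c⟩ with hF'
  have hinj : Function.Injective F' := by
    intro c₁ c₂ h
    have : F c₁ = F c₂ := congrArg Subtype.val h
    rw [← hFmk c₁, ← hFmk c₂, this]
  -- cardinality bookkeeping
  have hcard1 : Nat.card Q ≤ Fintype.card {x : Fin q ⊕ Fin q // ¬ p x} := by
    rw [← Nat.card_eq_fintype_card]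
    exact Nat.card_le_card_of_injective F' hinj
  have hcard2 : Fintype.card {x : Fin q ⊕ Fin q // ¬ p x}
      = Fintype.card (Fin q ⊕ Fin q) - Fintype.card {x : Fin q ⊕ Fin q // p x} :=
    Fintype.card_subtype_compl p
  have hcard3 : Fintype.card {x : Fin q ⊕ Fin q // p x} = bR β := by
    rw [Fintype.card_subtype, bR]
    symm
    apply Finset.card_bij (fun (i : Fin q) _ => (Sum.inr i : Fin q ⊕ Fin q))
    · intro i hi
      simp only [Finset.mem_filter, Finset.mem_univ, true_and] at hi ⊢
      exact ⟨rfl, hi⟩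
    · intro i _ j _ hij
      exact Sum.inr.inj hij
    · rintro (i | i) hx
      · simp only [Finset.mem_filter, Finset.mem_univ, true_and, hp] at hx
        simp at hx
      · simp only [Finset.mem_filter, Finset.mem_univ, true_and, hp] at hx
        exact ⟨i, by simp only [Finset.mem_filter, Finset.mem_univ, true_and]; exact hx.2, rfl⟩
  have hQcard : permCycles σ = Nat.card Q := rfl
  have hX : Nat.card (Fin q ⊕ Fin q) = Fintype.card (Fin q ⊕ Fin q) := Nat.card_eq_fintype_card
  have hple : Fintype.card {x : Fin q ⊕ Fin q // p x} ≤ Fintype.card (Fin q ⊕ Fin q) :=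
    Fintype.card_subtype_le _
  rw [permLength, hQcard]
  omega

end Counting

theorem stmt10 (q : ℕ) (hq : 1 ≤ q) (α β : Equiv.Perm (Fin q ⊕ Fin q))
    (hα : IsPairing α) (hβ : IsPairing β) :
    bR β ≤ permLength (deltaPerm q * α) + permLength (α * β) := by
  have h2 : deltaPerm q * β = (deltaPerm q * α) * (α * β) := by
    rw [mul_assoc, ← mul_assoc α α β, hα.1, one_mul]
  calc bR β ≤ permLength (deltaPerm q * β) := bR_le_permLength β
    _ = permLength ((deltaPerm q * α) * (α * β)) := by rw [h2]
    _ ≤ _ := permLength_mul_le _ _
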